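/- Let M_n = ⌊x_n⌋ where x_n solves n·ln(1+1/x) = ln 2 + ln(x+1). Then M_n ~ n/ln n as n → ∞. -/

import Mathlib

open Filter Asymptotics

lemma aux_log_upper {y : ℝ} (hy : 0 < y) : Real.log (1 + 1/y) ≤ 1/y := by
  have h := Real.log_le_sub_one_of_pos (show (0:ℝ) < 1 + 1/y by positivity)
  linarith

lemma aux_log_lower {y : ℝ} (hy : 0 < y) : 1/(y+1) ≤ Real.log (1 + 1/y) := by
  have h1 : Real.log (y/(y+1)) ≤ y/(y+1) - 1 := Real.log_le_sub_one_of_pos (by positivity)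
  have h2 : Real.log (y/(y+1)) = - Real.log (1 + 1/y) := by
    rw [← Real.log_inv]
    congr 1
    field_simp
  have h3 : y/(y+1) - 1 = -(1/(y+1)) := by field_simp; ring
  rw [h2, h3] at h1
  linarith

lemma aux_L_tendsto : Tendsto (fun t : ℝ => Real.log 2 + Real.log (t+1)) atTop atTop := by
  apply tendsto_atTop_add_const_left
  exact Real.tendsto_log_atTop.comp (tendsto_atTop_add_const_right _ 1 tendsto_id)

lemma aux_small : Tendsto (fun t : ℝ => Real.log (1 + 1/t)) atTop (nhds 0) := by
  have h1 : Tendsto (fun t : ℝ => 1 + 1/t) atTop (nhds (1 + 0)) :=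
    tendsto_const_nhds.add (tendsto_inv_atTop_zero.congr fun t => (one_div t).symm)
  rw [add_zero] at h1
  have h2 : Tendsto Real.log (nhds (1:ℝ)) (nhds (Real.log 1)) :=
    (Real.continuousAt_log one_ne_zero).tendsto
  simpa [Real.log_one, Function.comp_def] using h2.comp h1

lemma aux_invlog : Tendsto (fun t : ℝ => (Real.log t)⁻¹) atTop (nhds 0) :=
  Real.tendsto_log_atTop.inv_tendsto_atTop

-- log t / (log 2 + log (t+1)) → 1
lemma aux_b : Tendsto (fun t : ℝ => Real.log t / (Real.log 2 + Real.log (t+1))) atTop (nhds 1) := by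
  have key : Tendsto (fun t : ℝ => (Real.log 2 + Real.log (t+1)) / Real.log t) atTop (nhds 1) := by
    have hnum : Tendsto (fun t : ℝ => Real.log 2 + Real.log (1+1/t)) atTop
        (nhds (Real.log 2 + 0)) := tendsto_const_nhds.add aux_small
    rw [add_zero] at hnum
    have hp := hnum.mul aux_invlog
    rw [mul_zero] at hp
    have h1 : Tendsto (fun t : ℝ => 1 + (Real.log 2 + Real.log (1+1/t)) * (Real.log t)⁻¹)
        atTop (nhds (1 + 0)) := tendsto_const_nhds.add hp
    rw [add_zero] at h1
    apply h1.congr'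
    filter_upwards [eventually_gt_atTop (1:ℝ)] with t ht
    have ht0 : (0:ℝ) < t := by linarith
    have hlt : Real.log t ≠ 0 := ne_of_gt (Real.log_pos ht)
    have hsplit : Real.log (t+1) = Real.log t + Real.log (1+1/t) := by
      rw [← Real.log_mul (ne_of_gt ht0) (by positivity)]
      congr 1
      field_simp
    rw [hsplit]
    field_simp
    ring
  have h1 : Tendsto (fun t : ℝ => ((Real.log 2 + Real.log (t+1)) / Real.log t)⁻¹)
      atTop (nhds 1⁻¹) := key.inv₀ one_ne_zero
  simpa [inv_div] using h1

-- log (t+1) / (log 2 + log (t+1)) → 1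
lemma aux_b' : Tendsto (fun t : ℝ => Real.log (t+1) / (Real.log 2 + Real.log (t+1))) atTop (nhds 1) := by
  have key : Tendsto (fun t : ℝ => (Real.log 2 + Real.log (t+1)) / Real.log (t+1)) atTop (nhds 1) := by
    have hinv : Tendsto (fun t : ℝ => (Real.log (t+1))⁻¹) atTop (nhds 0) :=
      aux_invlog.comp (tendsto_atTop_add_const_right _ 1 tendsto_id)
    have h0 : Tendsto (fun t : ℝ => Real.log 2 * (Real.log (t+1))⁻¹ + 1) atTop
        (nhds (Real.log 2 * 0 + 1)) := (tendsto_const_nhds.mul hinv).add tendsto_const_nhds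
    rw [mul_zero, zero_add] at h0
    apply h0.congr'
    filter_upwards [eventually_gt_atTop (1:ℝ)] with t ht
    have hlt : Real.log (t+1) ≠ 0 := ne_of_gt (Real.log_pos (by linarith))
    field_simp
  have h1 : Tendsto (fun t : ℝ => ((Real.log 2 + Real.log (t+1)) / Real.log (t+1))⁻¹)
      atTop (nhds 1⁻¹) := key.inv₀ one_ne_zero
  simpa [inv_div] using h1

-- log L / L → 0 where L = log 2 + log (t+1)
lemma aux_a : Tendsto (fun t : ℝ =>
    Real.log (Real.log 2 + Real.log (t+1)) / (Real.log 2 + Real.log (t+1))) atTop (nhds 0) :=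
  (Real.isLittleO_log_id_atTop.tendsto_div_nhds_zero).comp aux_L_tendsto

lemma aux_c : Tendsto (fun t : ℝ => t/(t+1)) atTop (nhds 1) := by
  have h0 : Tendsto (fun t : ℝ => 1 - (t+1)⁻¹) atTop (nhds (1 - 0)) :=
    tendsto_const_nhds.sub (tendsto_inv_atTop_zero.comp (tendsto_atTop_add_const_right _ 1 tendsto_id))
  rw [sub_zero] at h0
  apply h0.congr'
  filter_upwards [eventually_gt_atTop (0:ℝ)] with t ht
  field_simp
  ring

lemma aux_F : Tendsto (fun t : ℝ =>
    (Real.log t + Real.log (Real.log 2 + Real.log (t+1))) / (Real.log 2 + Real.log (t+1))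
      * (t/(t+1))) atTop (nhds 1) := by
  have h := (aux_b.add aux_a).mul aux_c
  have e : ((1:ℝ) + 0) * 1 = 1 := by norm_num
  rw [e] at h
  apply h.congr
  intro t
  rw [add_div]

lemma aux_G : Tendsto (fun t : ℝ =>
    (Real.log (t+1) + Real.log (Real.log 2 + Real.log (t+1))) / (Real.log 2 + Real.log (t+1)))
    atTop (nhds 1) := by
  have h := aux_b'.add aux_a
  have e : ((1:ℝ) + 0) = 1 := by norm_num
  rw [e] at h
  apply h.congr
  intro t
  rw [add_div]

lemma aux_squeeze (n : ℕ) (y : ℝ) (hy2 : 2 ≤ y)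
    (hsol' : (n:ℝ) * Real.log (1 + 1/y) = Real.log 2 + Real.log (y+1)) :
    (Real.log y + Real.log (Real.log 2 + Real.log (y+1))) / (Real.log 2 + Real.log (y+1))
        * (y/(y+1)) ≤ y * Real.log n / n
    ∧ y * Real.log n / n ≤
      (Real.log (y+1) + Real.log (Real.log 2 + Real.log (y+1))) / (Real.log 2 + Real.log (y+1)) := by
  set L : ℝ := Real.log 2 + Real.log (y+1) with hL_def
  have hy0 : (0:ℝ) < y := by linarith
  have hL1 : 1 ≤ L := by
    have h3 : (1:ℝ) ≤ Real.log 3 := by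
      rw [Real.le_log_iff_exp_le (by norm_num)]
      have := Real.exp_one_lt_d9
      linarith
    have h4 : Real.log 3 ≤ Real.log (y+1) := Real.log_le_log (by norm_num) (by linarith)
    have h2 : 0 < Real.log 2 := Real.log_pos (by norm_num)
    rw [hL_def]
    linarith
  have hL0 : 0 < L := by linarith
  have hyL : y * L ≤ n := by
    have h1 : L ≤ (n:ℝ) * (1/y) := by
      rw [← hsol']
      exact mul_le_mul_of_nonneg_left (aux_log_upper hy0) (Nat.cast_nonneg n)
    rw [mul_one_div, le_div_iff₀ hy0] at h1
    linarith
  have hnyL : (n:ℝ) ≤ (y+1) * L := by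
    have h1 : (n:ℝ) * (1/(y+1)) ≤ L := by
      rw [← hsol']
      exact mul_le_mul_of_nonneg_left (aux_log_lower hy0) (Nat.cast_nonneg n)
    rw [mul_one_div, div_le_iff₀ (by linarith : (0:ℝ) < y+1)] at h1
    linarith
  have hnpos : (0:ℝ) < n := by nlinarith
  have hlogy0 : 0 < Real.log y := Real.log_pos (by linarith)
  have hlogL0 : 0 ≤ Real.log L := Real.log_nonneg hL1
  have hlogn_lo : Real.log y + Real.log L ≤ Real.log n := by
    rw [← Real.log_mul (ne_of_gt hy0) (ne_of_gt hL0)]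
    exact Real.log_le_log (by positivity) hyL
  have hlogn_hi : Real.log n ≤ Real.log (y+1) + Real.log L := by
    rw [← Real.log_mul (by positivity) (ne_of_gt hL0)]
    exact Real.log_le_log hnpos hnyL
  have hlogn_nonneg : 0 ≤ Real.log n := by linarith
  constructor
  · have key : y * (Real.log y + Real.log L) / ((y+1) * L) ≤ y * Real.log n / n := by
      gcongr
    calc (Real.log y + Real.log L) / L * (y/(y+1))
        = y * (Real.log y + Real.log L) / ((y+1) * L) := by
          field_simp
      _ ≤ y * Real.log n / n := key
  · calc y * Real.log n / n ≤ y * Real.log n / (y * L) := by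
          gcongr
      _ = Real.log n / L := by rw [mul_div_mul_left _ _ (ne_of_gt hy0)]
      _ ≤ (Real.log (y+1) + Real.log L) / L := by gcongr

theorem stmt7 (x : ℕ → ℝ) (M : ℕ → ℕ) (N : ℕ)
    (hpos : ∀ n ≥ N, 0 < x n)
    (hsol : ∀ n ≥ N, (n : ℝ) * Real.log (1 + 1 / x n) = Real.log 2 + Real.log (x n + 1))
    (hM : ∀ n ≥ N, M n = ⌊x n⌋₊) :
    (fun n => (M n : ℝ)) ~[atTop] (fun n => (n : ℝ) / Real.log n) := by
  -- Step 1: x n → ∞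
  have hx : Tendsto x atTop atTop := by
    rw [tendsto_atTop]
    intro b
    set b' : ℝ := max b 1 with hb'def
    have hb'pos : (0:ℝ) < b' := lt_of_lt_of_le one_pos (le_max_right _ _)
    have hlogpos : 0 < Real.log (1 + 1/b') := Real.log_pos (by
      have : 0 < 1/b' := by positivity
      linarith)
    have htend : Tendsto (fun n : ℕ => (n:ℝ) * Real.log (1 + 1/b')) atTop atTop :=
      tendsto_natCast_atTop_atTop.atTop_mul_const hlogpos
    filter_upwards [eventually_ge_atTop N,
      htend.eventually_gt_atTop (Real.log 2 + Real.log (b' + 1))] with n hn hgt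
    by_contra hcon
    push_neg at hcon
    have hxb : x n < b' := lt_of_lt_of_le hcon (le_max_left _ _)
    have hx0 := hpos n hn
    have h1 : Real.log (1 + 1/b') ≤ Real.log (1 + 1/x n) := by
      apply Real.log_le_log (by positivity)
      have := one_div_le_one_div_of_le hx0 hxb.le
      linarith
    have h2 : Real.log (x n + 1) ≤ Real.log (b' + 1) :=
      Real.log_le_log (by linarith) (by linarith)
    have h3 : (n:ℝ) * Real.log (1 + 1/b') ≤ (n:ℝ) * Real.log (1 + 1/x n) :=
      mul_le_mul_of_nonneg_left h1 (Nat.cast_nonneg n)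
    rw [hsol n hn] at h3
    linarith
  -- Step 2: squeeze x n * log n / n → 1
  have hmain : Tendsto (fun n : ℕ => x n * Real.log n / n) atTop (nhds 1) := by
    apply tendsto_of_tendsto_of_tendsto_of_le_of_le' (aux_F.comp hx) (aux_G.comp hx)
    · filter_upwards [eventually_ge_atTop N, hx.eventually_ge_atTop 2] with n hn hy2
      exact (aux_squeeze n (x n) hy2 (hsol n hn)).1
    · filter_upwards [eventually_ge_atTop N, hx.eventually_ge_atTop 2] with n hn hy2
      exact (aux_squeeze n (x n) hy2 (hsol n hn)).2
  -- Step 3: M n * log n / n → 1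
  have hlogdiv : Tendsto (fun n : ℕ => Real.log n / n) atTop (nhds 0) :=
    (Real.isLittleO_log_id_atTop.tendsto_div_nhds_zero).comp tendsto_natCast_atTop_atTop
  have hdiff : Tendsto (fun n : ℕ => ((M n : ℝ) - x n) * (Real.log n / n)) atTop (nhds 0) := by
    have hneg := hlogdiv.neg
    rw [neg_zero] at hneg
    apply tendsto_of_tendsto_of_tendsto_of_le_of_le' hneg hlogdiv
    · filter_upwards [eventually_ge_atTop N, eventually_ge_atTop 1] with n hn hn1
      have hx0 := hpos n hn
      have hfloor2 : x n - 1 < (M n : ℝ) := by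
        rw [hM n hn]
        have := Nat.lt_floor_add_one (x n)
        linarith
      have hld : 0 ≤ Real.log n / n := by
        apply div_nonneg _ (Nat.cast_nonneg n)
        apply Real.log_nonneg
        exact_mod_cast hn1
      nlinarith
    · filter_upwards [eventually_ge_atTop N, eventually_ge_atTop 1] with n hn hn1
      have hx0 := hpos n hn
      have hfloor : (M n : ℝ) ≤ x n := by
        rw [hM n hn]
        exact Nat.floor_le (le_of_lt hx0)
      have hld : 0 ≤ Real.log n / n := by
        apply div_nonneg _ (Nat.cast_nonneg n)
        apply Real.log_nonneg
        exact_mod_cast hn1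
      nlinarith
  have hMtend : Tendsto (fun n : ℕ => (M n : ℝ) * Real.log n / n) atTop (nhds 1) := by
    have h := hmain.add hdiff
    rw [add_zero] at h
    apply h.congr
    intro n
    rw [mul_div_assoc, mul_div_assoc]
    ring
  -- Step 4: conclude
  rw [isEquivalent_iff_tendsto_one]
  · apply hMtend.congr
    intro n
    simp only [Pi.div_apply]
    rw [div_div_eq_mul_div]
  · filter_upwards [eventually_ge_atTop 2] with n hn
    have hn0 : (0:ℝ) < n := by exact_mod_cast Nat.lt_of_lt_of_le Nat.zero_lt_two hn
    have hln : 0 < Real.log n := Real.log_pos (by exact_mod_cast Nat.lt_of_lt_of_le Nat.one_lt_two hn)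
    positivity
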